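/- Let T be a finite monolithic group whose unique minimal normal subgroup K is non-abelian and isomorphic to S^r for a non-abelian finite simple group S and some r ≥ 1. Let Aut₁(T) denote the group of automorphisms f of T which induce the identity on T/K, i.e. f(t)·t⁻¹ ∈ K for all t ∈ T. Then |Aut₁(T)| ≤ r·|Aut(S)|^r. -/

import Mathlib

namespace Aut1Aux

open Subgroup

variable {r : ℕ} {S : Type*} [Group S]

/-- the i-th coordinate factor of S^r -/
def F (i : Fin r) : Subgroup (Fin r → S) := (MonoidHom.mulSingle (fun _ => S) i).range

lemma mem_F {i : Fin r} {g : Fin r → S} :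
    g ∈ (F i : Subgroup (Fin r → S)) ↔ ∃ s, Pi.mulSingle i s = g := by
  simp [F, MonoidHom.mem_range, MonoidHom.mulSingle_apply]

lemma mulSingle_mem_F (i : Fin r) (s : S) :
    Pi.mulSingle i s ∈ (F i : Subgroup (Fin r → S)) := mem_F.2 ⟨s, rfl⟩

lemma conj_mulSingle (h : Fin r → S) (i : Fin r) (s : S) :
    h * Pi.mulSingle i s * h⁻¹ = Pi.mulSingle i (h i * s * (h i)⁻¹) := by
  funext j
  by_cases hj : j = i
  · subst hj; simp [Pi.mul_apply]
  · simp [Pi.mul_apply, Pi.mulSingle_eq_of_ne hj]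

instance F_normal (i : Fin r) : (F i : Subgroup (Fin r → S)).Normal := by
  constructor
  intro x hx g
  obtain ⟨s, rfl⟩ := mem_F.1 hx
  rw [conj_mulSingle]
  exact mulSingle_mem_F _ _

lemma F_ne_bot [Nontrivial S] (i : Fin r) : (F i : Subgroup (Fin r → S)) ≠ ⊥ := by
  obtain ⟨s, hs⟩ := exists_ne (1 : S)
  intro h
  have hm := mulSingle_mem_F (S := S) i s
  rw [h, Subgroup.mem_bot] at hm
  apply hs
  simpa using congrFun hm i

lemma F_inj [Nontrivial S] {i j : Fin r} (h : (F i : Subgroup (Fin r → S)) = F j) : i = j := by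
  by_contra hij
  obtain ⟨s, hs⟩ := exists_ne (1 : S)
  have hm := mulSingle_mem_F (S := S) i s
  rw [h, mem_F] at hm
  obtain ⟨s', hs'⟩ := hm
  have h1 := congrFun hs' i
  rw [Pi.mulSingle_eq_of_ne hij, Pi.mulSingle_eq_same] at h1
  exact hs h1.symm

lemma center_eq_bot (hS : IsSimpleGroup S) (hSna : ¬ ∀ x y : S, x * y = y * x) :
    Subgroup.center S = ⊥ := by
  rcases hS.eq_bot_or_eq_top_of_normal (Subgroup.center S) inferInstance with h | h
  · exact h
  · exfalso
    apply hSna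
    intro x y
    have hy : y ∈ Subgroup.center S := by rw [h]; trivial
    exact (Subgroup.mem_center_iff.1 hy x)

lemma exists_F_le (hS : IsSimpleGroup S) (hSna : ¬ ∀ x y : S, x * y = y * x)
    {N : Subgroup (Fin r → S)} (hN : N.Normal) (hNbot : N ≠ ⊥) :
    ∃ i, (F i : Subgroup (Fin r → S)) ≤ N := by
  haveI := hS
  obtain ⟨n, hnN, hn1⟩ := Subgroup.nontrivial_iff_exists_ne_one N |>.1
    (Subgroup.nontrivial_iff_ne_bot N |>.2 hNbot)
  have : ∃ i, n i ≠ 1 := by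
    by_contra hc
    push_neg at hc
    exact hn1 (funext hc)
  obtain ⟨i, hni⟩ := this
  have hnc : n i ∉ Subgroup.center S := by
    rw [center_eq_bot hS hSna, Subgroup.mem_bot]; exact hni
  rw [Subgroup.mem_center_iff] at hnc
  push_neg at hnc
  obtain ⟨s, hsc⟩ := hnc
  set c : S := s * n i * s⁻¹ * (n i)⁻¹ with hc
  have hc1 : c ≠ 1 := by
    intro h
    apply hsc
    rw [hc] at h
    have h2 : s * n i = (s * n i * s⁻¹ * (n i)⁻¹) * (n i * s) := by group
    rw [h, one_mul] at h2
    exact h2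
  have hmN : Pi.mulSingle i c ∈ N := by
    have h1 : Pi.mulSingle i s * n * (Pi.mulSingle i s)⁻¹ * n⁻¹ ∈ N :=
      N.mul_mem (hN.conj_mem n hnN _) (N.inv_mem hnN)
    have h2 : Pi.mulSingle i s * n * (Pi.mulSingle i s)⁻¹ * n⁻¹ = Pi.mulSingle i c := by
      funext j
      by_cases hj : j = i
      · subst hj; simp [Pi.mul_apply, hc]
      · simp [Pi.mul_apply, Pi.mulSingle_eq_of_ne hj]
    rwa [h2] at h1
  refine ⟨i, ?_⟩
  set N' : Subgroup S := Subgroup.comap (MonoidHom.mulSingle (fun _ => S) i) N with hN'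
  have hN'norm : N'.Normal := by
    constructor
    intro a ha g
    rw [hN', Subgroup.mem_comap] at *
    have : (MonoidHom.mulSingle (fun _ => S) i) (g * a * g⁻¹) =
        Pi.mulSingle i g * Pi.mulSingle i a * (Pi.mulSingle i g)⁻¹ := by
      rw [MonoidHom.mulSingle_apply, conj_mulSingle]
      simp
    rw [this]
    exact hN.conj_mem _ ha _
  have hN'bot : N' ≠ ⊥ := by
    intro h
    have : c ∈ N' := by rwa [hN', Subgroup.mem_comap, MonoidHom.mulSingle_apply]
    rw [h, Subgroup.mem_bot] at this
    exact hc1 this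
  have hN'top : N' = ⊤ := by
    rcases hS.eq_bot_or_eq_top_of_normal N' hN'norm with h | h
    · exact absurd h hN'bot
    · exact h
  rintro x ⟨a, rfl⟩
  have : a ∈ N' := by rw [hN'top]; trivial
  rwa [hN', Subgroup.mem_comap] at this



lemma eq_F_of_le (hS : IsSimpleGroup S) (hSna : ¬ ∀ x y : S, x * y = y * x)
    {N : Subgroup (Fin r → S)} (hN : N.Normal) (hNbot : N ≠ ⊥) {i : Fin r}
    (hle : N ≤ F i) : N = F i := by
  haveI := hS
  obtain ⟨j, hj⟩ := exists_F_le hS hSna hN hNbot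
  have hji : j = i := by
    by_contra hji
    obtain ⟨s, hs⟩ := exists_ne (1 : S)
    have hm := hle (hj (mulSingle_mem_F j s))
    obtain ⟨s', hs'⟩ := mem_F.1 hm
    have h1 := congrFun hs' j
    rw [Pi.mulSingle_eq_of_ne hji, Pi.mulSingle_eq_same] at h1
    exact hs h1.symm
  exact le_antisymm hle (hji ▸ hj)

lemma map_symm_map (α : (Fin r → S) ≃* (Fin r → S)) (H : Subgroup (Fin r → S)) :
    (H.map α.toMonoidHom).map α.symm.toMonoidHom = H := by
  rw [Subgroup.map_map]
  have h : α.symm.toMonoidHom.comp α.toMonoidHom = MonoidHom.id _ := by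
    ext x; simp
  rw [h, Subgroup.map_id]

lemma map_F_exists (hS : IsSimpleGroup S) (hSna : ¬ ∀ x y : S, x * y = y * x)
    (α : (Fin r → S) ≃* (Fin r → S)) (i : Fin r) :
    ∃ j, (F i).map α.toMonoidHom = F j := by
  haveI := hS
  have h1 : ((F i).map α.toMonoidHom).Normal := (F_normal i).map _ α.surjective
  have h2 : (F i).map α.toMonoidHom ≠ ⊥ := fun hbot => F_ne_bot i
    (((F i).map_eq_bot_iff_of_injective
      (show Function.Injective ⇑α.toMonoidHom from α.injective)).1 hbot)
  obtain ⟨j, hj⟩ := exists_F_le hS hSna h1 h2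
  refine ⟨j, ?_⟩
  have h3 : (F j).map α.symm.toMonoidHom ≤ F i := by
    have := Subgroup.map_mono (f := α.symm.toMonoidHom) hj
    rwa [map_symm_map] at this
  have h4 : ((F j).map α.symm.toMonoidHom).Normal := (F_normal j).map _ α.symm.surjective
  have h5 : (F j).map α.symm.toMonoidHom ≠ ⊥ := fun hbot => F_ne_bot j
    (((F j).map_eq_bot_iff_of_injective
      (show Function.Injective ⇑α.symm.toMonoidHom from α.symm.injective)).1 hbot)
  have h6 := eq_F_of_le hS hSna h4 h5 h3
  have := congrArg (Subgroup.map α.toMonoidHom) h6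
  rw [show ((F j).map α.symm.toMonoidHom).map α.toMonoidHom = F j from by
    have := map_symm_map α.symm (F j); simpa using this] at this
  exact this.symm

open scoped Classical in
noncomputable def pIdx (α : (Fin r → S) ≃* (Fin r → S)) (i : Fin r) : Fin r :=
  if h : ∃ j, (F i).map α.toMonoidHom = F j then h.choose else i

lemma pIdx_spec (hS : IsSimpleGroup S) (hSna : ¬ ∀ x y : S, x * y = y * x)
    (α : (Fin r → S) ≃* (Fin r → S)) (i : Fin r) :
    (F i).map α.toMonoidHom = F (pIdx α i) := by
  have h := map_F_exists hS hSna α i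
  rw [pIdx]
  rw [dif_pos h]
  exact h.choose_spec

lemma pIdx_unique (hS : IsSimpleGroup S) (hSna : ¬ ∀ x y : S, x * y = y * x)
    (α : (Fin r → S) ≃* (Fin r → S)) {i j : Fin r}
    (h : (F i).map α.toMonoidHom = F j) : pIdx α i = j := by
  haveI := hS
  exact F_inj ((pIdx_spec hS hSna α i).symm.trans h)

lemma pIdx_congr {α β : (Fin r → S) ≃* (Fin r → S)} (h : ∀ g, α g = β g) :
    pIdx α = pIdx β := by
  have : α = β := MulEquiv.ext h
  rw [this]

lemma pIdx_trans (hS : IsSimpleGroup S) (hSna : ¬ ∀ x y : S, x * y = y * x)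
    (α β : (Fin r → S) ≃* (Fin r → S)) (i : Fin r) :
    pIdx (α.trans β) i = pIdx β (pIdx α i) := by
  apply pIdx_unique hS hSna
  have h : (α.trans β).toMonoidHom = β.toMonoidHom.comp α.toMonoidHom := by ext x; rfl
  rw [h, ← Subgroup.map_map, pIdx_spec hS hSna α i, pIdx_spec hS hSna β _]

lemma pIdx_conj (hS : IsSimpleGroup S) (hSna : ¬ ∀ x y : S, x * y = y * x)
    (c : Fin r → S) (i : Fin r) : pIdx (MulAut.conj c : (Fin r → S) ≃* (Fin r → S)) i = i := by
  apply pIdx_unique hS hSna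
  apply le_antisymm
  · rintro x ⟨y, hy, rfl⟩
    exact (F_normal i).conj_mem y hy c
  · intro x hx
    refine ⟨c⁻¹ * x * c, ?_, ?_⟩
    · have := (F_normal i).conj_mem x hx c⁻¹
      simpa using this
    · show (MulAut.conj c) (c⁻¹ * x * c) = x
      rw [MulAut.conj_apply]
      group

def P (O : Set (Fin r)) : Subgroup (Fin r → S) where
  carrier := {g | ∀ j ∉ O, g j = 1}
  one_mem' := fun _ _ => rfl
  mul_mem' := fun {a b} ha hb j hj => by
    rw [Pi.mul_apply, ha j hj, hb j hj, one_mul]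
  inv_mem' := fun {a} ha j hj => by rw [Pi.inv_apply, ha j hj, inv_one]

lemma mem_P {O : Set (Fin r)} {g : Fin r → S} :
    g ∈ (P O : Subgroup (Fin r → S)) ↔ ∀ j ∉ O, g j = 1 := Iff.rfl

lemma F_le_P {O : Set (Fin r)} {j : Fin r} (hj : j ∈ O) :
    (F j : Subgroup (Fin r → S)) ≤ P O := by
  intro x hx
  obtain ⟨s, rfl⟩ := mem_F.1 hx
  rw [mem_P]
  intro j' hj'
  have hne : j' ≠ j := fun h => hj' (h ▸ hj)
  exact Pi.mulSingle_eq_of_ne (M := fun _ => S) hne s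

lemma mulSingle_mem_P {O : Set (Fin r)} {j : Fin r} {s : S} (hs : s ≠ 1)
    (h : Pi.mulSingle j s ∈ (P O : Subgroup (Fin r → S))) : j ∈ O := by
  by_contra hj
  exact hs (by simpa using h j hj)

lemma map_P_le (hS : IsSimpleGroup S) (hSna : ¬ ∀ x y : S, x * y = y * x)
    (α : (Fin r → S) ≃* (Fin r → S)) (O : Set (Fin r))
    (hO : ∀ i ∈ O, pIdx α i ∈ O) :
    ∀ g ∈ (P O : Subgroup (Fin r → S)), α g ∈ (P O : Subgroup (Fin r → S)) := by
  intro g hg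
  have hdec := Finset.noncommProd_mulSingle g
  rw [← hdec]
  erw [Finset.map_noncommProd _ _ _ α]
  apply Subgroup.noncommProd_mem
  intro i _
  by_cases hi : i ∈ O
  · have hmem : α (Pi.mulSingle i (g i)) ∈ (F i).map α.toMonoidHom :=
      ⟨Pi.mulSingle i (g i), mulSingle_mem_F _ _, rfl⟩
    rw [pIdx_spec hS hSna α i] at hmem
    exact F_le_P (hO i hi) hmem
  · have : g i = 1 := hg i hi
    rw [this]
    simp only [Pi.mulSingle_one, map_one]
    exact (P O).one_mem

variable {T : Type*} [Group T] {K : Subgroup T}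

def liftAut (e : K ≃* (Fin r → S)) (φ : T ≃* T)
    (h : ∀ x ∈ K, φ x ∈ K) (h' : ∀ x ∈ K, φ.symm x ∈ K) :
    (Fin r → S) ≃* (Fin r → S) where
  toFun g := e ⟨φ (e.symm g), h _ (e.symm g).2⟩
  invFun g := e ⟨φ.symm (e.symm g), h' _ (e.symm g).2⟩
  left_inv g := by
    simp only [MulEquiv.symm_apply_apply, MulEquiv.apply_symm_apply, Subtype.coe_eta]
  right_inv g := by
    simp only [MulEquiv.symm_apply_apply, MulEquiv.apply_symm_apply, Subtype.coe_eta]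
  map_mul' x y := by
    show e ⟨φ (e.symm (x * y)), _⟩ = e ⟨φ (e.symm x), _⟩ * e ⟨φ (e.symm y), _⟩
    rw [← map_mul]
    congr 1
    apply Subtype.ext
    simp [map_mul]

lemma liftAut_apply (e : K ≃* (Fin r → S)) (φ : T ≃* T)
    (h : ∀ x ∈ K, φ x ∈ K) (h' : ∀ x ∈ K, φ.symm x ∈ K) (g : Fin r → S) :
    liftAut e φ h h' g = e ⟨φ (e.symm g), h _ (e.symm g).2⟩ := rfl

lemma liftAut_apply_coe (e : K ≃* (Fin r → S)) (φ : T ≃* T)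
    (h : ∀ x ∈ K, φ x ∈ K) (h' : ∀ x ∈ K, φ.symm x ∈ K) (x : K) :
    liftAut e φ h h' (e x) = e ⟨φ x, h _ x.2⟩ := by
  rw [liftAut_apply]
  congr 1
  apply Subtype.ext
  simp

lemma liftAut_comp (e : K ≃* (Fin r → S)) (φ ψ : T ≃* T)
    (hφ : ∀ x ∈ K, φ x ∈ K) (hφ' : ∀ x ∈ K, φ.symm x ∈ K)
    (hψ : ∀ x ∈ K, ψ x ∈ K) (hψ' : ∀ x ∈ K, ψ.symm x ∈ K)
    (h : ∀ x ∈ K, (φ.trans ψ) x ∈ K) (h' : ∀ x ∈ K, (φ.trans ψ).symm x ∈ K)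
    (g : Fin r → S) :
    liftAut e ψ hψ hψ' (liftAut e φ hφ hφ' g) = liftAut e (φ.trans ψ) h h' g := by
  simp only [liftAut_apply, MulEquiv.symm_apply_apply, MulEquiv.trans_apply]

lemma liftAut_congr (e : K ≃* (Fin r → S)) (φ φ' : T ≃* T)
    (hfun : ∀ x, φ x = φ' x)
    (h : ∀ x ∈ K, φ x ∈ K) (h' : ∀ x ∈ K, φ.symm x ∈ K)
    (h2 : ∀ x ∈ K, φ' x ∈ K) (h2' : ∀ x ∈ K, φ'.symm x ∈ K) (g : Fin r → S) :
    liftAut e φ h h' g = liftAut e φ' h2 h2' g := by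
  simp only [liftAut_apply]
  congr 1
  exact Subtype.ext (hfun _)

lemma liftAut_conjK (e : K ≃* (Fin r → S)) {k : T} (hk : k ∈ K)
    (h : ∀ x ∈ K, (MulAut.conj k : T ≃* T) x ∈ K)
    (h' : ∀ x ∈ K, (MulAut.conj k : T ≃* T).symm x ∈ K) (g : Fin r → S) :
    liftAut e (MulAut.conj k : T ≃* T) h h' g = (MulAut.conj (e ⟨k, hk⟩)) g := by
  have h1 : (⟨(MulAut.conj k : T ≃* T) ↑(e.symm g), h _ (e.symm g).2⟩ : K) =
      (⟨k, hk⟩ : K) * e.symm g * (⟨k, hk⟩ : K)⁻¹ :=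
    Subtype.ext (by simp [MulAut.conj_apply])
  have h2 := congrArg e h1
  rw [map_mul, map_mul, map_inv, MulEquiv.apply_symm_apply] at h2
  rw [liftAut_apply]
  conv_rhs => rw [MulAut.conj_apply]
  exact h2

lemma conj_stab (hN : K.Normal) (t : T) : ∀ x ∈ K, (MulAut.conj t : T ≃* T) x ∈ K :=
  fun x hx => by simpa using hN.conj_mem x hx t

lemma conj_stab' (hN : K.Normal) (t : T) : ∀ x ∈ K, (MulAut.conj t : T ≃* T).symm x ∈ K :=
  fun x hx => by simpa using hN.conj_mem x hx t⁻¹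

lemma aut1_stab (f : MulAut T) (hf : ∀ t : T, f t * t⁻¹ ∈ K) :
    ∀ x ∈ K, (f : T ≃* T) x ∈ K := fun x hx => by
  simpa using K.mul_mem (hf x) hx

lemma aut1_stab' (f : MulAut T) (hf : ∀ t : T, f t * t⁻¹ ∈ K) :
    ∀ x ∈ K, (f : T ≃* T).symm x ∈ K := fun x hx => by
  have h := hf ((f : T ≃* T).symm x)
  rw [MulEquiv.apply_symm_apply] at h
  have h2 := K.inv_mem h
  rw [mul_inv_rev, inv_inv] at h2
  simpa using K.mul_mem h2 hx

noncomputable def Gam (e : K ≃* (Fin r → S)) (hN : K.Normal) (t : T) :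
    (Fin r → S) ≃* (Fin r → S) :=
  liftAut e (MulAut.conj t) (conj_stab hN t) (conj_stab' hN t)

noncomputable def rho (e : K ≃* (Fin r → S)) (hN : K.Normal) (t : T) : Fin r → Fin r :=
  pIdx (Gam e hN t)

noncomputable def Alift (e : K ≃* (Fin r → S)) (f : MulAut T)
    (hf : ∀ t : T, f t * t⁻¹ ∈ K) : (Fin r → S) ≃* (Fin r → S) :=
  liftAut e (f : T ≃* T) (aut1_stab f hf) (aut1_stab' f hf)

noncomputable def piA (e : K ≃* (Fin r → S)) (f : MulAut T)
    (hf : ∀ t : T, f t * t⁻¹ ∈ K) : Fin r → Fin r :=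
  pIdx (Alift e f hf)

lemma piA_spec (hS : IsSimpleGroup S) (hSna : ¬ ∀ x y : S, x * y = y * x)
    (e : K ≃* (Fin r → S)) (f : MulAut T) (hf : ∀ t : T, f t * t⁻¹ ∈ K) (i : Fin r) :
    (F i).map (Alift e f hf).toMonoidHom = F (piA e f hf i) :=
  pIdx_spec hS hSna _ i

lemma Gam_apply_coe (e : K ≃* (Fin r → S)) (hN : K.Normal) (t : T) (x : T) (hx : x ∈ K) :
    Gam e hN t (e ⟨x, hx⟩) = e ⟨t * x * t⁻¹, hN.conj_mem x hx t⟩ := by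
  simp only [Gam]
  rw [liftAut_apply_coe]
  congr 1

lemma Alift_apply_coe (e : K ≃* (Fin r → S)) (f : MulAut T)
    (hf : ∀ t : T, f t * t⁻¹ ∈ K) (x : K) :
    Alift e f hf (e x) = e ⟨(f : T ≃* T) x, aut1_stab f hf _ x.2⟩ :=
  liftAut_apply_coe e (f : T ≃* T) (aut1_stab f hf) (aut1_stab' f hf) x

lemma rho_mul (hS : IsSimpleGroup S) (hSna : ¬ ∀ x y : S, x * y = y * x)
    (e : K ≃* (Fin r → S)) (hN : K.Normal) (t u : T) (i : Fin r) :
    rho e hN (t * u) i = rho e hN t (rho e hN u i) := by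
  have hcomp : ∀ x ∈ K, ((MulAut.conj u : T ≃* T).trans (MulAut.conj t : T ≃* T)) x ∈ K :=
    fun x hx => conj_stab hN t _ (conj_stab hN u x hx)
  have hcomp' : ∀ x ∈ K, ((MulAut.conj u : T ≃* T).trans (MulAut.conj t : T ≃* T)).symm x ∈ K :=
    fun x hx => conj_stab' hN u _ (conj_stab' hN t x hx)
  have h1 : ∀ g, Gam e hN (t * u) g = ((Gam e hN u).trans (Gam e hN t)) g := by
    intro g
    calc Gam e hN (t * u) g
        = liftAut e ((MulAut.conj u : T ≃* T).trans (MulAut.conj t : T ≃* T)) hcomp hcomp' g := by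
          simp only [Gam]
          exact liftAut_congr e _ _
            (fun x => by simp [MulAut.conj_apply, MulEquiv.trans_apply, mul_assoc]) _ _ _ _ g
      _ = ((Gam e hN u).trans (Gam e hN t)) g := by
          simp only [Gam]
          exact (liftAut_comp e (MulAut.conj u) (MulAut.conj t) (conj_stab hN u)
            (conj_stab' hN u) (conj_stab hN t) (conj_stab' hN t) hcomp hcomp' g).symm
  simp only [rho]
  rw [pIdx_congr h1]
  exact pIdx_trans hS hSna _ _ i

lemma rho_memK (hS : IsSimpleGroup S) (hSna : ¬ ∀ x y : S, x * y = y * x)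
    (e : K ≃* (Fin r → S)) (hN : K.Normal) {k : T} (hk : k ∈ K) (i : Fin r) :
    rho e hN k i = i := by
  have h1 : ∀ g, Gam e hN k g =
      (MulAut.conj (e ⟨k, hk⟩) : (Fin r → S) ≃* (Fin r → S)) g := by
    intro g
    simp only [Gam]
    exact liftAut_conjK e hk _ _ g
  simp only [rho]
  rw [pIdx_congr h1]
  exact pIdx_conj hS hSna _ i

lemma piA_rho_comm (hS : IsSimpleGroup S) (hSna : ¬ ∀ x y : S, x * y = y * x)
    (e : K ≃* (Fin r → S)) (hN : K.Normal) (f : MulAut T)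
    (hf : ∀ t : T, f t * t⁻¹ ∈ K) (t : T) (i : Fin r) :
    piA e f hf (rho e hN t i) = rho e hN t (piA e f hf i) := by
  have hc1 : ∀ x ∈ K, ((MulAut.conj t : T ≃* T).trans (f : T ≃* T)) x ∈ K :=
    fun x hx => aut1_stab f hf _ (conj_stab hN t x hx)
  have hc1' : ∀ x ∈ K, ((MulAut.conj t : T ≃* T).trans (f : T ≃* T)).symm x ∈ K :=
    fun x hx => conj_stab' hN t _ (aut1_stab' f hf x hx)
  have hc2 : ∀ x ∈ K, ((f : T ≃* T).trans (MulAut.conj (f t) : T ≃* T)) x ∈ K :=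
    fun x hx => conj_stab hN _ _ (aut1_stab f hf x hx)
  have hc2' : ∀ x ∈ K, ((f : T ≃* T).trans (MulAut.conj (f t) : T ≃* T)).symm x ∈ K :=
    fun x hx => aut1_stab' f hf _ (conj_stab' hN (f t) x hx)
  have hL : ∀ g, ((Gam e hN t).trans (Alift e f hf)) g =
      liftAut e ((MulAut.conj t : T ≃* T).trans (f : T ≃* T)) hc1 hc1' g := by
    intro g
    simp only [Gam, Alift]
    exact liftAut_comp e (MulAut.conj t) (f : T ≃* T) (conj_stab hN t) (conj_stab' hN t)
      (aut1_stab f hf) (aut1_stab' f hf) hc1 hc1' g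
  have hR : ∀ g, ((Alift e f hf).trans (Gam e hN (f t))) g =
      liftAut e ((f : T ≃* T).trans (MulAut.conj (f t) : T ≃* T)) hc2 hc2' g := by
    intro g
    simp only [Gam, Alift]
    exact liftAut_comp e (f : T ≃* T) (MulAut.conj (f t)) (aut1_stab f hf) (aut1_stab' f hf)
      (conj_stab hN (f t)) (conj_stab' hN (f t)) hc2 hc2' g
  have hM : ∀ g, liftAut e ((MulAut.conj t : T ≃* T).trans (f : T ≃* T)) hc1 hc1' g =
      liftAut e ((f : T ≃* T).trans (MulAut.conj (f t) : T ≃* T)) hc2 hc2' g := by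
    intro g
    apply liftAut_congr
    intro x
    simp [MulAut.conj_apply, MulEquiv.trans_apply, map_mul, mul_assoc]
  have key : piA e f hf (rho e hN t i) = rho e hN (f t) (piA e f hf i) := by
    have e1 : piA e f hf (rho e hN t i) =
        pIdx ((Gam e hN t).trans (Alift e f hf)) i := by
      simp only [piA, rho]
      exact (pIdx_trans hS hSna _ _ i).symm
    have e2 : rho e hN (f t) (piA e f hf i) =
        pIdx ((Alift e f hf).trans (Gam e hN (f t))) i := by
      simp only [piA, rho]
      exact (pIdx_trans hS hSna _ _ i).symm
    rw [e1, e2, pIdx_congr hL, pIdx_congr hR, pIdx_congr hM]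
  rw [key]
  have hft : f t = (f t * t⁻¹) * t := by group
  rw [hft, rho_mul hS hSna e hN _ t, rho_memK hS hSna e hN (hf t)]

noncomputable def compHom (e : K ≃* (Fin r → S)) (f : MulAut T)
    (hf : ∀ t : T, f t * t⁻¹ ∈ K) (i : Fin r) : S →* S :=
  (Pi.evalMonoidHom (fun _ => S) (piA e f hf i)).comp
    ((Alift e f hf).toMonoidHom.comp (MonoidHom.mulSingle (fun _ => S) i))

lemma compHom_apply (e : K ≃* (Fin r → S)) (f : MulAut T)
    (hf : ∀ t : T, f t * t⁻¹ ∈ K) (i : Fin r) (s : S) :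
    compHom e f hf i s = Alift e f hf (Pi.mulSingle i s) (piA e f hf i) := rfl

end Aut1Aux


open Aut1Aux

theorem statement2 (T : Type*) [Group T] [Fintype T] (S : Type*) [Group S] [Fintype S]
    (hS : IsSimpleGroup S) (hSna : ¬ ∀ x y : S, x * y = y * x)
    (K : Subgroup T) [K.Normal] (hKbot : K ≠ ⊥)
    (hmin : ∀ N : Subgroup T, N.Normal → N ≠ ⊥ → K ≤ N)
    (hKna : ¬ ∀ x y : ↥K, x * y = y * x)
    (r : ℕ) (hr : 1 ≤ r) (e : ↥K ≃* (Fin r → S)) :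
    Nat.card {f : MulAut T // ∀ t : T, f t * t⁻¹ ∈ K} ≤ r * Nat.card (MulAut S) ^ r := by
  classical
  haveI := hS
  haveI : Finite (MulAut S) :=
    Finite.of_injective (fun f => (f : S → S)) DFunLike.coe_injective
  have hN : K.Normal := inferInstance
  set i0 : Fin r := ⟨0, hr⟩ with hi0
  set O : Set (Fin r) := {j | ∃ t : T, rho e hN t i0 = j} with hO
  have hOstab : ∀ (t : T), ∀ j ∈ O, rho e hN t j ∈ O := by
    rintro t j ⟨u, rfl⟩
    exact ⟨t * u, rho_mul hS hSna e hN t u i0⟩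
  have hi0O : i0 ∈ O := ⟨1, rho_memK hS hSna e hN K.one_mem i0⟩
  -- the subgroup of T corresponding to the factors supported on the orbit O
  set N : Subgroup T := ((P O).comap e.toMonoidHom).map K.subtype with hNdef
  have hmemN : ∀ (x : T) (hx : x ∈ K), (x ∈ N ↔ e ⟨x, hx⟩ ∈ P O) := by
    intro x hx
    constructor
    · rintro ⟨⟨y, hy⟩, hyP, rfl⟩
      exact hyP
    · intro h
      exact ⟨⟨x, hx⟩, h, rfl⟩
  have hNnorm : N.Normal := by
    constructor
    intro n hn t
    obtain ⟨⟨x, hxK⟩, hxP, rfl⟩ := hn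
    have hxP' : e ⟨x, hxK⟩ ∈ P O := hxP
    have hKx : t * x * t⁻¹ ∈ K := hN.conj_mem x hxK t
    refine (hmemN (t * (K.subtype ⟨x, hxK⟩) * t⁻¹) (hN.conj_mem _ hxK t)).2 ?_
    have hstep := map_P_le hS hSna (Gam e hN t) O (fun i hi => hOstab t i hi) _ hxP'
    rw [Gam_apply_coe] at hstep
    exact hstep
  have hNbot : N ≠ ⊥ := by
    obtain ⟨s, hs⟩ := exists_ne (1 : S)
    intro hbot
    have hmem : ((e.symm (Pi.mulSingle i0 s)) : T) ∈ N := by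
      rw [hmemN _ (e.symm (Pi.mulSingle i0 s)).2, Subtype.coe_eta, MulEquiv.apply_symm_apply]
      exact F_le_P hi0O (mulSingle_mem_F i0 s)
    rw [hbot, Subgroup.mem_bot] at hmem
    have h2 : e.symm (Pi.mulSingle i0 s) = (1 : K) := OneMemClass.coe_eq_one.mp hmem
    have h3 := congrArg e h2
    rw [MulEquiv.apply_symm_apply, map_one] at h3
    exact hs (by simpa using congrFun h3 i0)
  have hKN : K ≤ N := hmin N hNnorm hNbot
  have htrans : ∀ j : Fin r, ∃ t : T, rho e hN t i0 = j := by
    intro j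
    obtain ⟨s, hs⟩ := exists_ne (1 : S)
    have hx := hKN (e.symm (Pi.mulSingle j s)).2
    rw [hmemN _ (e.symm (Pi.mulSingle j s)).2, Subtype.coe_eta,
      MulEquiv.apply_symm_apply] at hx
    exact mulSingle_mem_P hs hx
  -- injectivity of restriction to K
  have hrestr : ∀ (f g : {f : MulAut T // ∀ t : T, f t * t⁻¹ ∈ K}),
      (∀ x : K, f.1 (x : T) = g.1 (x : T)) → f = g := by
    intro f g hfg
    have hcent : Subgroup.centralizer (K : Set T) = ⊥ := by
      by_contra hne
      have hnorm : (Subgroup.centralizer (K : Set T)).Normal := by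
        constructor
        intro c hc t
        rw [Subgroup.mem_centralizer_iff] at hc ⊢
        intro y hy
        have h1 : t⁻¹ * y * t ∈ K := by simpa using hN.conj_mem y hy t⁻¹
        have h2 := hc _ h1
        calc y * (t * c * t⁻¹) = t * ((t⁻¹ * y * t) * c) * t⁻¹ := by group
        _ = t * (c * (t⁻¹ * y * t)) * t⁻¹ := by rw [h2]
        _ = (t * c * t⁻¹) * y := by group
      have hKC := hmin _ hnorm hne
      apply hKna
      intro x y
      apply Subtype.ext
      have := Subgroup.mem_centralizer_iff.1 (hKC y.2) (x : T) x.2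
      simpa using this
    apply Subtype.ext
    apply MulEquiv.ext
    intro t
    have hcK : (g.1 t)⁻¹ * f.1 t ∈ K := by
      have h1 := f.2 t
      have h2 := g.2 t
      have h3 : (g.1 t)⁻¹ * f.1 t = t⁻¹ * ((g.1 t * t⁻¹)⁻¹ * (f.1 t * t⁻¹)) * t := by group
      rw [h3]
      have h4 : (g.1 t * t⁻¹)⁻¹ * (f.1 t * t⁻¹) ∈ K := K.mul_mem (K.inv_mem h2) h1
      simpa using hN.conj_mem _ h4 t⁻¹
    have hccent : (g.1 t)⁻¹ * f.1 t ∈ Subgroup.centralizer (K : Set T) := by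
      rw [Subgroup.mem_centralizer_iff]
      intro y hy
      have hxK : (f.1 : T ≃* T).symm y ∈ K := aut1_stab' f.1 f.2 y hy
      have hfx : f.1 ((f.1 : T ≃* T).symm y) = y := MulEquiv.apply_symm_apply _ y
      have hgx : g.1 ((f.1 : T ≃* T).symm y) = y := by
        rw [← hfg ⟨(f.1 : T ≃* T).symm y, hxK⟩]
        exact hfx
      have hTx : t * ((f.1 : T ≃* T).symm y) * t⁻¹ ∈ K := hN.conj_mem _ hxK t
      have h5 : f.1 (t * ((f.1 : T ≃* T).symm y) * t⁻¹) =
          g.1 (t * ((f.1 : T ≃* T).symm y) * t⁻¹) := hfg ⟨_, hTx⟩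
      simp only [map_mul, map_inv] at h5
      rw [hfx, hgx] at h5
      calc y * ((g.1 t)⁻¹ * f.1 t)
          = (g.1 t)⁻¹ * (g.1 t * y * (g.1 t)⁻¹) * f.1 t := by group
      _ = (g.1 t)⁻¹ * (f.1 t * y * (f.1 t)⁻¹) * f.1 t := by rw [← h5]
      _ = ((g.1 t)⁻¹ * f.1 t) * y := by group
    rw [hcent, Subgroup.mem_bot] at hccent
    have h7 : g.1 t * ((g.1 t)⁻¹ * f.1 t) = g.1 t * 1 := by rw [hccent]
    simpa using h7
  -- each automorphism sends a coordinate subgroup onto a coordinate subgroup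
  have hAmem : ∀ (f : {f : MulAut T // ∀ t : T, f t * t⁻¹ ∈ K}) (i : Fin r) (s : S),
      Alift e f.1 f.2 (Pi.mulSingle i s) =
        Pi.mulSingle (piA e f.1 f.2 i) (Alift e f.1 f.2 (Pi.mulSingle i s) (piA e f.1 f.2 i)) := by
    intro f i s
    have h1 : Alift e f.1 f.2 (Pi.mulSingle i s) ∈ F (piA e f.1 f.2 i) := by
      rw [← piA_spec hS hSna e f.1 f.2 i]
      exact ⟨Pi.mulSingle i s, mulSingle_mem_F i s, rfl⟩
    obtain ⟨s', hs'⟩ := mem_F.1 h1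
    rw [← hs', Pi.mulSingle_eq_same]
  have hinj : ∀ (f : {f : MulAut T // ∀ t : T, f t * t⁻¹ ∈ K}) (i : Fin r),
      Function.Injective ⇑(compHom e f.1 f.2 i) := by
    intro f i s1 s2 hss
    have hv : Alift e f.1 f.2 (Pi.mulSingle i s1) (piA e f.1 f.2 i) =
        Alift e f.1 f.2 (Pi.mulSingle i s2) (piA e f.1 f.2 i) := hss
    have h1 : Alift e f.1 f.2 (Pi.mulSingle i s1) = Alift e f.1 f.2 (Pi.mulSingle i s2) := by
      rw [hAmem f i s1, hAmem f i s2, hv]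
    have h3 := (Alift e f.1 f.2).injective h1
    have h4 := congrFun h3 i
    simpa using h4
  -- the injection
  set Φ : {f : MulAut T // ∀ t : T, f t * t⁻¹ ∈ K} → Fin r × (Fin r → MulAut S) :=
    fun f => (piA e f.1 f.2 i0,
      fun i => MulEquiv.ofBijective (compHom e f.1 f.2 i)
        (Finite.injective_iff_bijective.1 (hinj f i))) with hΦ
  have hΦinj : Function.Injective Φ := by
    intro f g hfgΦ
    have h0 : piA e f.1 f.2 i0 = piA e g.1 g.2 i0 := congrArg Prod.fst hfgΦ
    have hcompeq : ∀ (i : Fin r) (s : S), compHom e f.1 f.2 i s = compHom e g.1 g.2 i s := by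
      intro i s
      have h2 := congrFun (congrArg Prod.snd hfgΦ) i
      exact DFunLike.congr_fun h2 s
    have hπ : ∀ j, piA e f.1 f.2 j = piA e g.1 g.2 j := by
      intro j
      obtain ⟨t, ht⟩ := htrans j
      rw [← ht, piA_rho_comm hS hSna e hN f.1 f.2 t i0,
        piA_rho_comm hS hSna e hN g.1 g.2 t i0, h0]
    have hAeq : ∀ x : Fin r → S, Alift e f.1 f.2 x = Alift e g.1 g.2 x := by
      have hhom : (Alift e f.1 f.2).toMonoidHom = (Alift e g.1 g.2).toMonoidHom := by
        apply MonoidHom.pi_ext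
        intro i x
        show Alift e f.1 f.2 (Pi.mulSingle i x) = Alift e g.1 g.2 (Pi.mulSingle i x)
        have hv : Alift e f.1 f.2 (Pi.mulSingle i x) (piA e f.1 f.2 i) =
            Alift e g.1 g.2 (Pi.mulSingle i x) (piA e g.1 g.2 i) := hcompeq i x
        rw [hAmem f i x, hAmem g i x, hv, hπ i]
      intro x
      exact congrArg (fun (h : (Fin r → S) →* (Fin r → S)) => h x) hhom
    apply hrestr
    intro x
    have h4 := hAeq (e x)
    rw [Alift_apply_coe, Alift_apply_coe] at h4
    have h5 := e.injective h4
    exact congrArg Subtype.val h5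
  have hcard := Nat.card_le_card_of_injective Φ hΦinj
  rwa [Nat.card_prod, Nat.card_pi, Finset.prod_const, Finset.card_univ,
    Nat.card_eq_fintype_card (α := Fin r), Fintype.card_fin] at hcard
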